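/- Let Ŷ ∈ ℝ^{n×m}, F ⊆ ℝ^{n×m} nonempty closed, and for a quadratic q_k(Y) = tr(Yᵀ A_k Y) + 2 tr(B_kᵀ Y) + c_k define the expanded function q̃_k(Ŷ) = q_k(Ŷ) + ‖∇q_k(Ŷ)‖_F d_F(Ŷ) + ‖A_k‖₂ d_F(Ŷ)². Then for every Y ∈ ℝ^{n×m} with ‖Y − Ŷ‖_F ≤ d_F(Ŷ), one has q_k(Y) ≤ q̃_k(Ŷ). In particular, if q̃_k(Ŷ) < 0 (i.e., constraint k is not quasi-binding), then every closest point of F to Ŷ strictly satisfies the inequality constraint q_k(Y) < 0. -/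

import Mathlib

open Matrix Finset

/-- Frobenius norm of a real matrix. -/
noncomputable def frob {n m : ℕ} (M : Matrix (Fin n) (Fin m) ℝ) : ℝ :=
  Real.sqrt (∑ i, ∑ j, (M i j) ^ 2)

/-- Spectral (operator) norm of a square real matrix. -/
noncomputable def spec {n : ℕ} (A : Matrix (Fin n) (Fin n) ℝ) : ℝ :=
  ‖Matrix.toEuclideanCLM (𝕜 := ℝ) A‖

/-- Euclidean norm of a finitely-indexed real vector. -/
noncomputable def euc {ι : Type*} [Fintype ι] (x : ι → ℝ) : ℝ :=
  Real.sqrt (∑ i, (x i) ^ 2)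

/-- The quadratic function q(Y) = tr(Yᵀ A Y) + 2 tr(Bᵀ Y) + c. -/
noncomputable def quadF {n m : ℕ} (A : Matrix (Fin n) (Fin n) ℝ)
    (B : Matrix (Fin n) (Fin m) ℝ) (c : ℝ) (Y : Matrix (Fin n) (Fin m) ℝ) : ℝ :=
  (Yᵀ * A * Y).trace + 2 * (Bᵀ * Y).trace + c

/-- The gradient ∇q(Y) = 2(AY + B). -/
noncomputable def gradF {n m : ℕ} (A : Matrix (Fin n) (Fin n) ℝ)
    (B Y : Matrix (Fin n) (Fin m) ℝ) : Matrix (Fin n) (Fin m) ℝ :=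
  (2 : ℝ) • (A * Y + B)

/-- Frobenius distance from a point to a set of matrices. -/
noncomputable def distF {n m : ℕ} (F : Set (Matrix (Fin n) (Fin m) ℝ))
    (Z : Matrix (Fin n) (Fin m) ℝ) : ℝ :=
  sInf ((fun Y => frob (Y - Z)) '' F)

/-- Smallest singular value: σ_min(J) = inf{‖Jᵀξ‖₂ : ‖ξ‖₂ = 1}. -/
noncomputable def sigMin {ι κ : Type*} [Fintype ι] [Fintype κ] (J : Matrix ι κ ℝ) : ℝ :=
  sInf {r | ∃ ξ : ι → ℝ, euc ξ = 1 ∧ r = euc (J.transpose.mulVec ξ)}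

/-- Spectral norm of a rectangular matrix: sup{‖Jx‖₂ : ‖x‖₂ = 1}. -/
noncomputable def specR {ι κ : Type*} [Fintype ι] [Fintype κ] (J : Matrix ι κ ℝ) : ℝ :=
  sSup {r | ∃ x : κ → ℝ, euc x = 1 ∧ r = euc (J.mulVec x)}

/-- Maximum absolute row-sum norm ‖M‖₁. -/
noncomputable def rowNorm {n : ℕ} (A : Matrix (Fin n) (Fin n) ℝ) : ℝ :=
  ⨆ i, ∑ j, |A i j|


lemma frob_nonneg {n m : ℕ} (M : Matrix (Fin n) (Fin m) ℝ) : 0 ≤ frob M :=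
  Real.sqrt_nonneg _

lemma frob_sq {n m : ℕ} (M : Matrix (Fin n) (Fin m) ℝ) :
    frob M ^ 2 = ∑ i, ∑ j, (M i j) ^ 2 :=
  Real.sq_sqrt (by positivity)

/-- Cauchy–Schwarz: tr(Mᵀ Δ) ≤ ‖M‖_F ‖Δ‖_F. -/
lemma trace_le_frob {n m : ℕ} (M Δ : Matrix (Fin n) (Fin m) ℝ) :
    (Mᵀ * Δ).trace ≤ frob M * frob Δ := by
  have htr : (Mᵀ * Δ).trace = ∑ p : Fin n × Fin m, M p.1 p.2 * Δ p.1 p.2 := by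
    simp only [Matrix.trace, Matrix.diag, Matrix.mul_apply, Matrix.transpose_apply,
      Fintype.sum_prod_type]
    exact Finset.sum_comm ..
  have hcs := Finset.sum_mul_sq_le_sq_mul_sq Finset.univ
      (fun p : Fin n × Fin m => M p.1 p.2) (fun p => Δ p.1 p.2)
  have h1 : frob M ^ 2 = ∑ p : Fin n × Fin m, (M p.1 p.2) ^ 2 := by
    rw [frob_sq, Fintype.sum_prod_type]
  have h2 : frob Δ ^ 2 = ∑ p : Fin n × Fin m, (Δ p.1 p.2) ^ 2 := by
    rw [frob_sq, Fintype.sum_prod_type]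
  have h3 : (∑ p : Fin n × Fin m, M p.1 p.2 * Δ p.1 p.2) ^ 2 ≤ (frob M * frob Δ) ^ 2 := by
    rw [mul_pow, h1, h2]; exact hcs
  rw [htr]
  calc (∑ p : Fin n × Fin m, M p.1 p.2 * Δ p.1 p.2)
      ≤ |∑ p : Fin n × Fin m, M p.1 p.2 * Δ p.1 p.2| := le_abs_self _
    _ = Real.sqrt ((∑ p : Fin n × Fin m, M p.1 p.2 * Δ p.1 p.2) ^ 2) := (Real.sqrt_sq_eq_abs _).symm
    _ ≤ Real.sqrt ((frob M * frob Δ) ^ 2) := Real.sqrt_le_sqrt h3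
    _ = frob M * frob Δ := by
        rw [Real.sqrt_sq_eq_abs, abs_of_nonneg (mul_nonneg (frob_nonneg M) (frob_nonneg Δ))]

/-- quadratic form bound via operator norm. -/
lemma quadform_le {n : ℕ} (A : Matrix (Fin n) (Fin n) ℝ) (x : Fin n → ℝ) :
    ∑ i, (A.mulVec x i) * x i ≤ spec A * ∑ i, (x i) ^ 2 := by
  set x' : EuclideanSpace ℝ (Fin n) := (WithLp.equiv 2 (Fin n → ℝ)).symm x with hx'
  have happ : Matrix.toEuclideanCLM (𝕜 := ℝ) A x' = (WithLp.equiv 2 (Fin n → ℝ)).symm (A.mulVec x) := by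
    rw [hx']; rfl
  have hinner : (inner ℝ (Matrix.toEuclideanCLM (𝕜 := ℝ) A x') x' : ℝ)
      = ∑ i, (A.mulVec x i) * x i := by
    rw [happ]
    simp [PiLp.inner_apply, RCLike.inner_apply, hx', WithLp.equiv_symm_apply, PiLp.toLp_apply, mul_comm]
  have hnx : ‖x'‖ ^ 2 = ∑ i, (x i) ^ 2 := by
    rw [EuclideanSpace.norm_eq]
    rw [Real.sq_sqrt (by positivity)]
    simp [hx', WithLp.equiv_symm_apply, PiLp.toLp_apply, sq_abs]
  calc ∑ i, (A.mulVec x i) * x i = inner ℝ (Matrix.toEuclideanCLM (𝕜 := ℝ) A x') x' := hinner.symm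
    _ ≤ ‖Matrix.toEuclideanCLM (𝕜 := ℝ) A x'‖ * ‖x'‖ := real_inner_le_norm _ _
    _ ≤ (spec A * ‖x'‖) * ‖x'‖ := by
        gcongr
        exact (Matrix.toEuclideanCLM (𝕜 := ℝ) A).le_opNorm x'
    _ = spec A * ∑ i, (x i) ^ 2 := by rw [mul_assoc, ← sq, hnx]

lemma quad_trace_le {n m : ℕ} (A : Matrix (Fin n) (Fin n) ℝ)
    (Δ : Matrix (Fin n) (Fin m) ℝ) :
    (Δᵀ * A * Δ).trace ≤ spec A * frob Δ ^ 2 := by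
  have htr : (Δᵀ * A * Δ).trace = ∑ j, ∑ i, (A.mulVec (fun i => Δ i j) i) * (Δ i j) := by
    rw [Matrix.trace]
    refine Finset.sum_congr rfl fun j _ => ?_
    simp only [Matrix.diag, Matrix.mul_apply, Matrix.transpose_apply, Matrix.mulVec,
      dotProduct, Finset.sum_mul]
    rw [Finset.sum_comm]
    refine Finset.sum_congr rfl fun i _ => Finset.sum_congr rfl fun k _ => by ring
  rw [htr, frob_sq]
  have hsw : (∑ i, ∑ j, (Δ i j) ^ 2) = ∑ j, ∑ i, (Δ i j) ^ 2 := Finset.sum_comm ..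
  rw [hsw]
  calc ∑ j, ∑ i, (A.mulVec (fun i => Δ i j) i) * (Δ i j)
      ≤ ∑ j, spec A * ∑ i, (Δ i j) ^ 2 :=
        Finset.sum_le_sum fun j _ => quadform_le A (fun i => Δ i j)
    _ = spec A * ∑ j, ∑ i, (Δ i j) ^ 2 := by rw [Finset.mul_sum]

lemma trace_sym {n m : ℕ} {A : Matrix (Fin n) (Fin n) ℝ} (hA : A.IsSymm)
    (X Z : Matrix (Fin n) (Fin m) ℝ) :
    (Xᵀ * A * Z).trace = (Zᵀ * A * X).trace := by
  rw [← Matrix.trace_transpose (Xᵀ * A * Z)]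
  simp only [Matrix.transpose_mul, Matrix.transpose_transpose]
  rw [hA]
  rw [Matrix.mul_assoc]

lemma quad_expand {n m : ℕ} {A : Matrix (Fin n) (Fin n) ℝ} (hA : A.IsSymm)
    (B : Matrix (Fin n) (Fin m) ℝ) (c : ℝ) (Ych Y : Matrix (Fin n) (Fin m) ℝ) :
    quadF A B c Y = quadF A B c Ych + ((gradF A B Ych)ᵀ * (Y - Ych)).trace
      + ((Y - Ych)ᵀ * A * (Y - Ych)).trace := by
  have hY : Y = Ych + (Y - Ych) := by abel
  set Δ := Y - Ych with hΔ
  have h1 : (Yᵀ * A * Y).trace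
      = (Ychᵀ * A * Ych).trace + 2 * (Δᵀ * A * Ych).trace + (Δᵀ * A * Δ).trace := by
    rw [hY]
    simp only [Matrix.transpose_add, Matrix.add_mul, Matrix.mul_add, Matrix.trace_add]
    have := trace_sym hA Ych Δ
    linarith
  have h2 : (Bᵀ * Y).trace = (Bᵀ * Ych).trace + (Bᵀ * Δ).trace := by
    rw [hY]
    simp only [Matrix.mul_add, Matrix.trace_add]
  have h3 : ((gradF A B Ych)ᵀ * Δ).trace
      = 2 * (Δᵀ * A * Ych).trace + 2 * (Bᵀ * Δ).trace := by
    have hsym := trace_sym hA Ych Δ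
    simp only [gradF, Matrix.transpose_smul, Matrix.transpose_add, Matrix.transpose_mul,
      Matrix.smul_mul, Matrix.add_mul, Matrix.trace_smul, Matrix.trace_add, smul_eq_mul]
    have : (Ychᵀ * Aᵀ * Δ).trace = (Δᵀ * A * Ych).trace := by
      rw [Matrix.mul_assoc, hA, ← Matrix.mul_assoc]; exact hsym
    rw [this]; ring
  simp only [quadF]
  rw [h1, h2, h3]; ring

theorem expanded_function_bound {n m : ℕ}
    (F : Set (Matrix (Fin n) (Fin m) ℝ)) (hFne : F.Nonempty) (hFcl : IsClosed F)
    (A : Matrix (Fin n) (Fin n) ℝ) (hA : A.IsSymm)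
    (B : Matrix (Fin n) (Fin m) ℝ) (c : ℝ)
    (Ych : Matrix (Fin n) (Fin m) ℝ) :
    (∀ Y : Matrix (Fin n) (Fin m) ℝ, frob (Y - Ych) ≤ distF F Ych →
      quadF A B c Y ≤ quadF A B c Ych +
        frob (gradF A B Ych) * distF F Ych + spec A * (distF F Ych) ^ 2) ∧
    ((quadF A B c Ych + frob (gradF A B Ych) * distF F Ych +
        spec A * (distF F Ych) ^ 2 < 0) →
      ∀ Y ∈ F, frob (Y - Ych) = distF F Ych → quadF A B c Y < 0) := by
  have main : ∀ Y : Matrix (Fin n) (Fin m) ℝ, frob (Y - Ych) ≤ distF F Ych →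
      quadF A B c Y ≤ quadF A B c Ych +
        frob (gradF A B Ych) * distF F Ych + spec A * (distF F Ych) ^ 2 := by
    intro Y hY
    have hΔ0 : 0 ≤ frob (Y - Ych) := frob_nonneg _
    have hspec : 0 ≤ spec A := norm_nonneg _
    have hg : 0 ≤ frob (gradF A B Ych) := frob_nonneg _
    rw [quad_expand hA B c Ych Y]
    have h1 := trace_le_frob (gradF A B Ych) (Y - Ych)
    have h2 := quad_trace_le A (Y - Ych)
    have h3 : frob (Y - Ych) ^ 2 ≤ distF F Ych ^ 2 := pow_le_pow_left₀ hΔ0 hY 2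
    nlinarith [mul_le_mul_of_nonneg_left hY hg, mul_le_mul_of_nonneg_left h3 hspec]
  exact ⟨main, fun hneg Y _ hYd => lt_of_le_of_lt (main Y hYd.le) hneg⟩
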